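/- Unconditional exclusion property (acyclicity of the free shelf): for all terms T, T' in FreeMagma Unit, the relations T ≡LD T' and T ⊏*LD T' cannot both hold; in particular T ⊏*LD T never holds, i.e., the free left shelf on one generator is acyclic. -/

import Mathlib

/-- LD-equivalence: the smallest congruence on `FreeMagma X` containing all pairs
`(T₁ ◃ (T₂ ◃ T₃), (T₁ ◃ T₂) ◃ (T₁ ◃ T₃))`. -/
inductive LDEquiv {X : Type*} : FreeMagma X → FreeMagma X → Prop
  | ld (a b c : FreeMagma X) : LDEquiv (a * (b * c)) ((a * b) * (a * c))
  | refl (a : FreeMagma X) : LDEquiv a a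
  | symm {a b : FreeMagma X} : LDEquiv a b → LDEquiv b a
  | trans {a b c : FreeMagma X} : LDEquiv a b → LDEquiv b c → LDEquiv a c
  | mul_left {a b : FreeMagma X} (c : FreeMagma X) : LDEquiv a b → LDEquiv (c * a) (c * b)
  | mul_right {a b : FreeMagma X} (c : FreeMagma X) : LDEquiv a b → LDEquiv (a * c) (b * c)

/-- LD-division on terms: `T ⊏LD T'` iff `T ◃ T₁ ≡LD T'` for some term `T₁`. -/
def LDDiv {X : Type*} (T T' : FreeMagma X) : Prop :=
  ∃ T₁ : FreeMagma X, LDEquiv (T * T₁) T'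



namespace LDAcyclic

abbrev F := FreeGroup ℕ

open FreeGroup

/-- letter -/
abbrev X (i : ℕ) : F := FreeGroup.of i

/-- reduced word predicate matching `FreeGroup.reduce` -/
def IsRed (w : List (ℕ × Bool)) : Prop :=
  List.Chain' (fun a b : ℕ × Bool => ¬(a.1 = b.1 ∧ a.2 = !b.2)) w

lemma isRed_reduce (w : List (ℕ × Bool)) : IsRed (reduce w) := by
  induction w with
  | nil => exact List.isChain_nil
  | cons a t ih =>
    rw [reduce.cons]
    rcases h : reduce t with _ | ⟨hd, tl⟩
    · simp [IsRed, List.Chain']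
    · rw [h] at ih
      dsimp only
      split_ifs with hc
      · exact ih.tail
      · exact List.IsChain.cons ih (by intro y hy; simp at hy; subst hy; exact hc)

lemma reduce_eq_self {w : List (ℕ × Bool)} (h : IsRed w) : reduce w = w := by
  induction w with
  | nil => rfl
  | cons a t ih =>
    have ht : IsRed t := h.tail
    rw [reduce.cons, ih ht]
    cases t with
    | nil => rfl
    | cons b t' =>
      dsimp only
      rw [if_neg]
      exact List.isChain_cons_cons.1 h |>.1

lemma isRed_toWord (f : F) : IsRed (toWord f) := by
  rw [← reduce_toWord]; exact isRed_reduce _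

lemma toWord_mul_eq {f g : F} (h : IsRed (toWord f ++ toWord g)) :
    toWord (f * g) = toWord f ++ toWord g := by
  conv_lhs => rw [← mk_toWord (x := f), ← mk_toWord (x := g)]
  rw [mul_mk, toWord_mk, reduce_eq_self h]

lemma isRed_append {w₁ w₂ : List (ℕ × Bool)} (h₁ : IsRed w₁) (h₂ : IsRed w₂)
    (hj : ∀ a ∈ w₁.getLast?, ∀ b ∈ w₂.head?, ¬(a.1 = b.1 ∧ a.2 = !b.2)) :
    IsRed (w₁ ++ w₂) :=
  List.isChain_append.2 ⟨h₁, h₂, hj⟩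

lemma toWord_mk_of_isRed {w : List (ℕ × Bool)} (h : IsRed w) : toWord (mk w) = w := by
  rw [toWord_mk, reduce_eq_self h]

/-- single letters -/
lemma mk_single_pos (x : ℕ) : mk [(x, true)] = X x := rfl

lemma mk_single_neg (x : ℕ) : mk [(x, false)] = (X x)⁻¹ := by
  rw [← mk_single_pos, inv_mk]; rfl

/-- cons with no cancellation -/
lemma toWord_cons_mul {x : ℕ} {b : Bool} {g : F}
    (h : ∀ l ∈ (toWord g).head?, ¬(x = l.1 ∧ b = !l.2)) :
    toWord (mk [(x, b)] * g) = (x, b) :: toWord g := by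
  conv_lhs => rw [← mk_toWord (x := g)]
  rw [mul_mk, List.singleton_append, toWord_mk, reduce.cons, reduce_eq_self (isRed_toWord g)]
  rcases hw : toWord g with _ | ⟨hd, tl⟩
  · rfl
  · dsimp only
    rw [if_neg]
    have := h hd (by rw [hw]; rfl)
    exact this

/-- cons with cancellation -/
lemma toWord_cons_cancel {x : ℕ} {b : Bool} {g : F} {t : List (ℕ × Bool)}
    (h : toWord g = (x, b) :: t) :
    toWord (mk [(x, !b)] * g) = t := by
  conv_lhs => rw [← mk_toWord (x := g)]
  rw [mul_mk, List.singleton_append, toWord_mk, reduce.cons, reduce_eq_self (isRed_toWord g), h]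
  dsimp only
  rw [if_pos ⟨rfl, rfl⟩]

/-- splitting off the head letter -/
lemma head_decomp {f : F} {l : ℕ × Bool} {t : List (ℕ × Bool)} (h : toWord f = l :: t) :
    f = mk [l] * ((mk [l])⁻¹ * f) ∧ toWord ((mk [l])⁻¹ * f) = t := by
  constructor
  · rw [← mul_assoc, mul_inv_cancel, one_mul]
  · obtain ⟨x, b⟩ := l
    rw [inv_mk]
    show toWord (mk [(x, !b)] * f) = t
    exact toWord_cons_cancel h

/-- mid-cancellation for appended words -/
lemma mk_append_cancel (A B : List (ℕ × Bool)) (x : ℕ) (b : Bool) :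
    mk (A ++ [(x, b)]) * mk ((x, !b) :: B) = mk A * mk B := by
  have h1 : mk (A ++ [(x, b)]) = mk A * mk [(x, b)] := (mul_mk).symm
  have h2 : mk ((x, !b) :: B) = mk [(x, !b)] * mk B := by rw [mul_mk, List.singleton_append]
  have h3 : mk [(x, b)] * mk [(x, !b)] = 1 := by
    cases b
    · show mk [(x, false)] * mk [(x, true)] = 1
      rw [mk_single_neg, mk_single_pos]; simp
    · show mk [(x, true)] * mk [(x, false)] = 1
      rw [mk_single_neg, mk_single_pos]; simp
  rw [h1, h2, mul_assoc, ← mul_assoc (mk [(x, b)]), h3, one_mul]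

end LDAcyclic

namespace LDAcyclic

open FreeGroup

/-- `f` has no occurrences of the generator `0` -/
def Fz (f : F) : Prop := ∀ l ∈ toWord f, l.1 ≠ 0

lemma Fz_one : Fz (1 : F) := by intro l hl; rw [toWord_one] at hl; cases hl

lemma Fz_mul {f g : F} (hf : Fz f) (hg : Fz g) : Fz (f * g) := by
  intro l hl
  have := (toWord_mul_sublist f g).mem hl
  rcases List.mem_append.1 this with h | h
  · exact hf l h
  · exact hg l h

lemma Fz_inv {f : F} (hf : Fz f) : Fz f⁻¹ := by
  intro l hl
  rw [toWord_inv] at hl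
  rw [invRev, List.mem_reverse, List.mem_map] at hl
  obtain ⟨a, ha, rfl⟩ := hl
  exact hf a ha

lemma Fz_of {j : ℕ} (h : j ≠ 0) : Fz (X j) := by
  intro l hl
  rw [toWord_of] at hl
  simp at hl
  subst hl; exact h

lemma Fz_hom {h : F →* F} (hgen : ∀ j : ℕ, j ≠ 0 → Fz (h (X j))) :
    ∀ f : F, Fz f → Fz (h f) := by
  have main : ∀ w : List (ℕ × Bool), (∀ l ∈ w, l.1 ≠ 0) → Fz (h (mk w)) := by
    intro w
    induction w with
    | nil => intro _; show Fz (h 1); rw [_root_.map_one]; exact Fz_one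
    | cons l t ih =>
      intro hw
      have : mk (l :: t) = mk [l] * mk t := by rw [mul_mk, List.singleton_append]
      rw [this, _root_.map_mul]
      refine Fz_mul ?_ (ih fun a ha => hw a (List.mem_cons_of_mem _ ha))
      obtain ⟨x, b⟩ := l
      have hx : x ≠ 0 := hw (x, b) (List.mem_cons_self)
      cases b
      · rw [mk_single_neg, _root_.map_inv]
        exact Fz_inv (hgen x hx)
      · rw [mk_single_pos]
        exact hgen x hx
  intro f hf
  have := main (toWord f) hf
  rwa [mk_toWord] at this

/-- an x₀-free nontrivial element has a nonempty word all of whose letters are nonzero -/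
lemma Fz_head {f : F} (hf : Fz f) (hne : f ≠ 1) :
    ∃ l t, toWord f = l :: t ∧ l.1 ≠ 0 := by
  rcases hw : toWord f with _ | ⟨l, t⟩
  · exact absurd (toWord_eq_nil_iff.1 hw) hne
  · exact ⟨l, t, rfl, hf l (by rw [hw]; exact (List.mem_cons_self))⟩

end LDAcyclic

namespace LDAcyclic

open FreeGroup

/-- head classes -/
def Qp (f : F) : Prop := (toWord f).head? = some (0, true)
def Qm (f : F) : Prop := (toWord f).head? = some (0, false)
def Nz (f : F) : Prop := ∃ l t, toWord f = l :: t ∧ l.1 ≠ 0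

lemma dropWhile_head_false {p : ℕ × Bool → Bool} {w : List (ℕ × Bool)} {l : ℕ × Bool}
    {t : List (ℕ × Bool)} (h : w.dropWhile p = l :: t) : p l = false := by
  induction w with
  | nil => cases h
  | cons a w' ih =>
    rw [List.dropWhile_cons] at h
    by_cases hpa : p a = true
    · rw [if_pos hpa] at h; exact ih h
    · rw [if_neg hpa] at h; cases h; simpa using hpa

lemma hc_main (π : F →* F) (hinj : Function.Injective π) (h0 : π (X 0) = X 0)
    (hfz : ∀ f, Fz f → Fz (π f)) :
    ∀ n (f : F), (toWord f).length ≤ n →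
      (Qp f → Qp (π f)) ∧ (Qm f → Qm (π f)) ∧ (Nz f → Nz (π f)) := by
  have hπ0 : ∀ b : Bool, π (mk [(0, b)]) = mk [(0, b)] := by
    intro b; cases b
    · rw [mk_single_neg, _root_.map_inv, h0, ← mk_single_neg]
    · rw [mk_single_pos, h0, ← mk_single_pos]
  intro n
  induction n with
  | zero =>
    intro f hf
    have : toWord f = [] := List.length_eq_zero_iff.1 (Nat.le_zero.1 hf)
    refine ⟨?_, ?_, ?_⟩ <;> intro h
    · exact absurd h (by rw [Qp, this]; simp)
    · exact absurd h (by rw [Qm, this]; simp)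
    · obtain ⟨l, t, ht, _⟩ := h; rw [this] at ht; cases ht
  | succ n ih =>
    intro f hf
    rcases hw : toWord f with _ | ⟨⟨x, b⟩, t⟩
    · refine ⟨?_, ?_, ?_⟩ <;> intro h
      · exact absurd h (by rw [Qp, hw]; simp)
      · exact absurd h (by rw [Qm, hw]; simp)
      · obtain ⟨l, t, ht, _⟩ := h; rw [hw] at ht; cases ht
    by_cases hx : x = 0
    · -- head letter is x₀^{±1}
      subst hx
      obtain ⟨hfd, hgt⟩ := head_decomp hw
      set g := (mk [((0:ℕ), b)])⁻¹ * f with hg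
      have hlen : (toWord g).length ≤ n := by
        rw [hgt]
        have := congrArg List.length hw
        simp at this; omega
      have ihg := ih g hlen
      have hred := isRed_toWord f
      rw [hw] at hred
      have hhead : ∀ l ∈ t.head?, ¬(((0:ℕ), b).1 = l.1 ∧ ((0:ℕ), b).2 = !l.2) :=
        (List.isChain_cons.1 hred).1
      -- π f = mk [(0,b)] * π g
      have hπf : π f = mk [((0:ℕ), b)] * π g := by
        conv_lhs => rw [hfd]
        rw [_root_.map_mul, hπ0]
      have key : (toWord (π f)).head? = some ((0:ℕ), b) := by
        rcases ht : t with _ | ⟨⟨y, c⟩, t'⟩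
        · -- g = 1
          have : g = 1 := toWord_eq_nil_iff.1 (by rw [hgt, ht])
          rw [hπf, this, _root_.map_one, mul_one, toWord_mk_of_isRed (by simp [IsRed, List.Chain'])]
          rfl
        · by_cases hy : y = 0
          · subst hy
            have hcb : b = c := by
              have h2 := hhead ((0:ℕ), c) (by rw [ht]; rfl)
              cases b <;> cases c
              · rfl
              · exact absurd ⟨rfl, rfl⟩ h2
              · exact absurd ⟨rfl, rfl⟩ h2
              · rfl
            rw [← hcb] at ht
            have hπg : (toWord (π g)).head? = some ((0:ℕ), b) := by
              cases b
              · exact (ihg.2.1) (by rw [Qm, hgt, ht]; rfl)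
              · exact (ihg.1) (by rw [Qp, hgt, ht]; rfl)
            rw [hπf, toWord_cons_mul (by intro l hl; rw [hπg] at hl; cases hl; simp)]
            rfl
          · have hπg : Nz (π g) := ihg.2.2 ⟨(y, c), t', by rw [hgt, ht], hy⟩
            obtain ⟨l', t'', hl', hl'1⟩ := hπg
            rw [hπf, toWord_cons_mul (by intro l hl; rw [hl'] at hl; cases hl; simp; intro h; exact absurd h.symm hl'1)]
            rfl
      refine ⟨?_, ?_, ?_⟩
      · intro h; rw [Qp, hw] at h; simp at h
        rw [Qp, key, h]
      · intro h; rw [Qm, hw] at h; simp at h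
        rw [Qm, key, h]
      · intro h; obtain ⟨l, tt, htt, hl1⟩ := h
        rw [hw] at htt; cases htt; simp at hl1
    · -- head letter nonzero: split maximal x₀-free prefix
      have hQpv : ¬ Qp f := by rw [Qp, hw]; simp; intro h; exact absurd h hx
      have hQmv : ¬ Qm f := by rw [Qm, hw]; simp; intro h; exact absurd h hx
      refine ⟨fun h => absurd h hQpv, fun h => absurd h hQmv, fun _ => ?_⟩
      set p : ℕ × Bool → Bool := fun l => l.1 != 0 with hp
      set wu := (toWord f).takeWhile p with hwu
      set wr := (toWord f).dropWhile p with hwr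
      set u := mk wu with hu
      set r := mk wr with hr
      have hf_eq : f = u * r := by
        rw [hu, hr, mul_mk, hwu, hwr, List.takeWhile_append_dropWhile, mk_toWord]
      have hwu_red : IsRed wu := (isRed_toWord f).prefix (List.takeWhile_prefix p)
      have hwr_red : IsRed wr := (isRed_toWord f).suffix (List.dropWhile_suffix p)
      have htu : toWord u = wu := toWord_mk_of_isRed hwu_red
      have htr : toWord r = wr := toWord_mk_of_isRed hwr_red
      have hwu_ne : wu = ((x, b)) :: (t.takeWhile p) := by
        rw [hwu, hw, List.takeWhile_cons_of_pos (by simp [hp, hx])]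
      have hfzu : Fz u := by
        intro l hl; rw [htu] at hl
        have := List.mem_takeWhile_imp hl
        simpa [hp] using this
      have hune : u ≠ 1 := by
        intro h; rw [h, toWord_one] at htu; rw [hwu_ne] at htu; cases htu
      have hπu_ne : π u ≠ 1 := fun h => hune (hinj (by rw [h, _root_.map_one]))
      have hfzπu : Fz (π u) := hfz u hfzu
      obtain ⟨l₀, t₀, hl₀, hl₀1⟩ := Fz_head hfzπu hπu_ne
      rcases hwrc : wr with _ | ⟨⟨y, c⟩, tr⟩
      · -- r = 1
        have : r = 1 := by rw [hr, hwrc]; rfl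
        rw [hf_eq, this, mul_one]
        exact ⟨l₀, t₀, hl₀, hl₀1⟩
      · have hy : y = 0 := by
          have := dropWhile_head_false (by rw [← hwr, hwrc])
          simpa [hp] using this
        subst hy
        have hlenr : (toWord r).length ≤ n := by
          have h1 := congrArg List.length (List.takeWhile_append_dropWhile (p := p) (l := toWord f))
          rw [List.length_append, ← hwu, ← hwr] at h1
          have h2 : (toWord f).length = n + 1 ∨ (toWord f).length ≤ n := by
            rcases Nat.lt_or_ge (toWord f).length (n+1) with h | h
            · right; omega
            · left; omega
          have h3 : wu.length ≥ 1 := by rw [hwu_ne]; simp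
          rw [htr]; omega
        have ihr := ih r hlenr
        have hπr : (toWord (π r)).head? = some ((0:ℕ), c) := by
          cases c
          · exact ihr.2.1 (by rw [Qm, htr, hwrc]; rfl)
          · exact ihr.1 (by rw [Qp, htr, hwrc]; rfl)
        -- assemble
        have hj : IsRed (toWord (π u) ++ toWord (π r)) := by
          refine isRed_append (isRed_toWord _) (isRed_toWord _) ?_
          intro a ha bb hb
          have ha1 : a.1 ≠ 0 := hfzπu a (List.mem_of_mem_getLast? ha)
          rw [hπr] at hb; cases hb
          simp; intro h; exact absurd h ha1
        have : toWord (π f) = toWord (π u) ++ toWord (π r) := by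
          rw [hf_eq, _root_.map_mul]; exact toWord_mul_eq hj
        refine ⟨l₀, t₀ ++ toWord (π r), ?_, hl₀1⟩
        rw [this, hl₀]; rfl

end LDAcyclic

namespace LDAcyclic

open FreeGroup

/-- Artin action of generator i on the free group -/
def am (i : ℕ) : ℕ → F := fun j =>
  if j = i then X i * X (i+1) * (X i)⁻¹ else if j = i + 1 then X i else X j

/-- inverse Artin action -/
def bm (i : ℕ) : ℕ → F := fun j =>
  if j = i then X (i+1) else if j = i + 1 then (X (i+1))⁻¹ * X i * X (i+1) else X j

def φ (i : ℕ) : F →* F := FreeGroup.lift (am i)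
def ψ (i : ℕ) : F →* F := FreeGroup.lift (bm i)

lemma φ_same (i : ℕ) : φ i (X i) = X i * X (i+1) * (X i)⁻¹ := by simp [φ, am]
lemma φ_succ (i : ℕ) : φ i (X (i+1)) = X i := by simp [φ, am]
lemma φ_other (i : ℕ) {j : ℕ} (h1 : j ≠ i) (h2 : j ≠ i + 1) : φ i (X j) = X j := by
  simp [φ, am, h1, h2]
lemma ψ_same (i : ℕ) : ψ i (X i) = X (i+1) := by simp [ψ, bm]
lemma ψ_succ (i : ℕ) : ψ i (X (i+1)) = (X (i+1))⁻¹ * X i * X (i+1) := by simp [ψ, bm]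
lemma ψ_other (i : ℕ) {j : ℕ} (h1 : j ≠ i) (h2 : j ≠ i + 1) : ψ i (X j) = X j := by
  simp [ψ, bm, h1, h2]

/-- index substitution implementing τ on x₀-free words -/
def sub (l : ℕ × Bool) : ℕ × Bool := if l.1 = 1 then (0, l.2) else l

lemma tau_mk_map {w : List (ℕ × Bool)} (hw : ∀ l ∈ w, l.1 ≠ 0) :
    φ 0 (mk w) = mk (w.map sub) := by
  induction w with
  | nil => show φ 0 1 = 1; rw [_root_.map_one]
  | cons l t ih =>
    have h1 : mk (l :: t) = mk [l] * mk t := by rw [mul_mk, List.singleton_append]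
    have h2 : mk (sub l :: t.map sub) = mk [sub l] * mk (t.map sub) := by
      rw [mul_mk, List.singleton_append]
    rw [List.map_cons, h1, h2, _root_.map_mul, ih (fun a ha => hw a (List.mem_cons_of_mem _ ha))]
    congr 1
    obtain ⟨x, b⟩ := l
    have hx : x ≠ 0 := hw (x, b) (List.mem_cons_self)
    by_cases hx1 : x = 1
    · subst hx1
      cases b
      · show φ 0 (mk [(1, false)]) = mk [(0, false)]
        rw [show mk [((1:ℕ), false)] = (X 1)⁻¹ from mk_single_neg 1,
          show mk [((0:ℕ), false)] = (X 0)⁻¹ from mk_single_neg 0, _root_.map_inv, φ_succ 0]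
      · show φ 0 (mk [(1, true)]) = mk [(0, true)]
        rw [mk_single_pos, mk_single_pos]
        exact φ_succ 0
    · have hsub : sub (x, b) = (x, b) := by simp [sub, hx1]
      rw [hsub]
      cases b
      · rw [mk_single_neg, _root_.map_inv, φ_other 0 hx (by simpa using hx1)]
      · rw [mk_single_pos, φ_other 0 hx (by simpa using hx1)]

lemma isRed_map_sub {w : List (ℕ × Bool)} (hw : ∀ l ∈ w, l.1 ≠ 0) (hred : IsRed w) :
    IsRed (w.map sub) := by
  induction w with
  | nil => exact List.isChain_nil
  | cons a t ih =>
    cases t with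
    | nil => simp [IsRed, List.Chain']
    | cons b t' =>
      have hab := (List.isChain_cons_cons.1 hred).1
      have ha : a.1 ≠ 0 := hw a (List.mem_cons_self)
      have hb : b.1 ≠ 0 := hw b (List.mem_cons_of_mem _ (List.mem_cons_self))
      rw [List.map_cons, List.map_cons]
      refine List.isChain_cons_cons.2 ⟨?_, ?_⟩
      · intro hcon
        apply hab
        refine ⟨?_, ?_⟩
        · -- index equality transfers back
          by_cases ha1 : a.1 = 1 <;> by_cases hb1 : b.1 = 1 <;>
            simp [sub, ha1, hb1] at hcon <;> omega
        · by_cases ha1 : a.1 = 1 <;> by_cases hb1 : b.1 = 1 <;>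
            simp [sub, ha1, hb1] at hcon <;> try tauto
      · have : List.map sub (b :: t') = sub b :: t'.map sub := rfl
        rw [← this]
        exact ih (fun l hl => hw l (List.mem_cons_of_mem _ hl)) (List.isChain_cons_cons.1 hred).2

lemma toWord_tau_fz {u : F} (hfz : Fz u) :
    toWord (φ 0 u) = (toWord u).map sub := by
  conv_lhs => rw [← mk_toWord (x := u)]
  rw [tau_mk_map hfz, toWord_mk_of_isRed (isRed_map_sub hfz (isRed_toWord u))]

lemma map_sub_no_one {w : List (ℕ × Bool)} (hw : ∀ l ∈ w, l.1 ≠ 0) :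
    ∀ l ∈ w.map sub, l.1 ≠ 1 := by
  intro l hl
  rw [List.mem_map] at hl
  obtain ⟨a, ha, rfl⟩ := hl
  have h0 := hw a ha
  by_cases h1 : a.1 = 1
  · simp [sub, h1]
  · simpa [sub, h1] using h1

lemma take_two {α : Type*} {w : List α} {a b : α} (h : w.take 2 = [a, b]) :
    ∃ r, w = a :: b :: r := by
  rcases w with _ | ⟨x, _ | ⟨y, r⟩⟩ <;> simp at h
  obtain ⟨rfl, rfl⟩ := h
  exact ⟨r, rfl⟩

end LDAcyclic

namespace LDAcyclic

open FreeGroup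

lemma tau_letter0 (b : Bool) :
    φ 0 (mk [((0:ℕ), b)]) = mk [((0:ℕ), true)] * (mk [((1:ℕ), b)] * mk [((0:ℕ), false)]) := by
  cases b
  · rw [mk_single_neg 0, _root_.map_inv, φ_same, mk_single_pos 0, mk_single_neg 1, zero_add]
    group
  · rw [mk_single_pos 0, φ_same, mk_single_pos 1, mk_single_neg 0, zero_add]
    group

lemma isRed_two {x y : ℕ} {b c : Bool} (h : IsRed [(x, b), (y, c)]) :
    ¬(x = y ∧ b = !c) := (List.isChain_cons_cons.1 h).1

lemma tau_main : ∀ n (f : F), (toWord f).length ≤ n →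
    (Qp f → (toWord (φ 0 f)).take 2 = [(0, true), (1, true)]) ∧
    (Qm f → (toWord (φ 0 f)).take 2 = [(0, true), (1, false)]) ∧
    (Nz f → toWord (φ 0 f) ≠ [] ∧
      ∀ c : Bool, (toWord (φ 0 f)).take 2 ≠ [(0, true), (1, c)]) := by
  intro n
  induction n with
  | zero =>
    intro f hf
    have hnil : toWord f = [] := List.length_eq_zero_iff.1 (Nat.le_zero.1 hf)
    refine ⟨fun h => ?_, fun h => ?_, fun h => ?_⟩
    · exact absurd h (by rw [Qp, hnil]; simp)
    · exact absurd h (by rw [Qm, hnil]; simp)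
    · obtain ⟨l, t, ht, _⟩ := h; rw [hnil] at ht; cases ht
  | succ n ih =>
    intro f hf
    rcases hw : toWord f with _ | ⟨⟨x, b⟩, t⟩
    · refine ⟨fun h => ?_, fun h => ?_, fun h => ?_⟩
      · exact absurd h (by rw [Qp, hw]; simp)
      · exact absurd h (by rw [Qm, hw]; simp)
      · obtain ⟨l, t, ht, _⟩ := h; rw [hw] at ht; cases ht
    by_cases hx : x = 0
    · -- head letter is x₀^{±1} : show take-2 is [(0,true),(1,b)]
      subst hx
      obtain ⟨hfd, hgt⟩ := head_decomp hw
      set g := (mk [((0:ℕ), b)])⁻¹ * f with hg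
      have hlen : (toWord g).length ≤ n := by
        rw [hgt]
        have := congrArg List.length hw
        simp at this; omega
      have ihg := ih g hlen
      have hred := isRed_toWord f
      rw [hw] at hred
      have hhead : ∀ l ∈ t.head?, ¬(((0:ℕ), b).1 = l.1 ∧ ((0:ℕ), b).2 = !l.2) :=
        (List.isChain_cons.1 hred).1
      -- first letter analysis of (mk [(0,false)] * φ 0 g)
      have hv1 : ∃ v, toWord (mk [((0:ℕ), false)] * φ 0 g) = v ∧
          ∀ l ∈ v.head?, ¬((1:ℕ) = l.1 ∧ b = !l.2) := by
        rcases ht : t with _ | ⟨⟨y, c⟩, t'⟩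
        · -- g = 1
          have hg1 : g = 1 := toWord_eq_nil_iff.1 (by rw [hgt, ht])
          refine ⟨[((0:ℕ), false)], ?_, ?_⟩
          · rw [hg1, _root_.map_one, mul_one, toWord_mk_of_isRed (by simp [IsRed, List.Chain'])]
          · intro l hl; cases hl; simp
        · by_cases hy : y = 0
          · subst hy
            have hcb : b = c := by
              have h2 := hhead ((0:ℕ), c) (by rw [ht]; rfl)
              cases b <;> cases c
              · rfl
              · exact absurd ⟨rfl, rfl⟩ h2
              · exact absurd ⟨rfl, rfl⟩ h2
              · rfl
            rw [← hcb] at ht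
            have hw₂ : (toWord (φ 0 g)).take 2 = [(0, true), (1, b)] := by
              cases b
              · exact ihg.2.1 (by rw [Qm, hgt, ht]; rfl)
              · exact ihg.1 (by rw [Qp, hgt, ht]; rfl)
            obtain ⟨t₂, ht₂⟩ := take_two hw₂
            refine ⟨((1:ℕ), b) :: t₂, ?_, ?_⟩
            · have : toWord (mk [((0:ℕ), (!true))] * φ 0 g) = (1, b) :: t₂ :=
                toWord_cons_cancel ht₂
              simpa using this
            · intro l hl; cases hl
              simp
          · -- Nz g
            have hNg := ihg.2.2 ⟨(y, c), t', by rw [hgt, ht], hy⟩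
            obtain ⟨hne₂, hex₂⟩ := hNg
            rcases hw₂ : toWord (φ 0 g) with _ | ⟨⟨z, d⟩, t₂⟩
            · exact absurd hw₂ hne₂
            by_cases hzd : z = 0 ∧ d = true
            · obtain ⟨rfl, rfl⟩ := hzd
              refine ⟨t₂, ?_, ?_⟩
              · have : toWord (mk [((0:ℕ), (!true))] * φ 0 g) = t₂ := toWord_cons_cancel hw₂
                simpa using this
              · intro l hl
                rcases ht₂h : t₂ with _ | ⟨l₂, t₃⟩
                · rw [ht₂h] at hl; cases hl
                · rw [ht₂h] at hl; cases hl
                  intro hcon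
                  obtain ⟨h1, _⟩ := hcon
                  apply hex₂ l.2
                  rw [hw₂, ht₂h]
                  have : l = (1, l.2) := by
                    obtain ⟨l1, l2⟩ := l; simp at h1 ⊢; omega
                  rw [← this]
                  rfl
            · refine ⟨((0:ℕ), false) :: (z, d) :: t₂, ?_, ?_⟩
              · rw [show ((0:ℕ), false) :: (z, d) :: t₂ = ((0:ℕ), false) :: toWord (φ 0 g) by
                  rw [hw₂]]
                refine toWord_cons_mul ?_
                intro l hl
                rw [hw₂] at hl; cases hl
                intro hcon
                obtain ⟨h1, h2⟩ := hcon
                apply hzd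
                constructor
                · omega
                · cases d
                  · cases h2
                  · rfl
              · intro l hl; cases hl; simp
      obtain ⟨v1, hv1w, hv1h⟩ := hv1
      have he2 : toWord (mk [((1:ℕ), b)] * (mk [((0:ℕ), false)] * φ 0 g)) =
          (1, b) :: v1 := by
        rw [show ((1:ℕ), b) :: v1 = ((1:ℕ), b) :: toWord (mk [((0:ℕ), false)] * φ 0 g) by rw [hv1w]]
        refine toWord_cons_mul ?_
        rw [hv1w]; exact hv1h
      have he3 : toWord (mk [((0:ℕ), true)] * (mk [((1:ℕ), b)] *
          (mk [((0:ℕ), false)] * φ 0 g))) = (0, true) :: (1, b) :: v1 := by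
        rw [show ((0:ℕ), true) :: (1, b) :: v1 =
          ((0:ℕ), true) :: toWord (mk [((1:ℕ), b)] * (mk [((0:ℕ), false)] * φ 0 g)) by rw [he2]]
        refine toWord_cons_mul ?_
        rw [he2]; intro l hl; cases hl; simp
      have hτf : toWord (φ 0 f) = (0, true) :: (1, b) :: v1 := by
        conv_lhs => rw [hfd]
        rw [_root_.map_mul, tau_letter0, mul_assoc, mul_assoc]
        exact he3
      refine ⟨fun h => ?_, fun h => ?_, fun h => ?_⟩
      · rw [Qp, hw] at h; simp at h; subst h
        rw [hτf]; rfl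
      · rw [Qm, hw] at h; simp at h; subst h
        rw [hτf]; rfl
      · obtain ⟨l, tt, htt, hl1⟩ := h
        rw [hw] at htt; cases htt; simp at hl1
    · -- head letter nonzero
      have hQpv : ¬ Qp f := by rw [Qp, hw]; simp; intro h; exact absurd h hx
      have hQmv : ¬ Qm f := by rw [Qm, hw]; simp; intro h; exact absurd h hx
      refine ⟨fun h => absurd h hQpv, fun h => absurd h hQmv, fun _ => ?_⟩
      set p : ℕ × Bool → Bool := fun l => l.1 != 0 with hp
      set wu := (toWord f).takeWhile p with hwu
      set wr := (toWord f).dropWhile p with hwr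
      set u := mk wu with hu
      set r := mk wr with hr
      have hf_eq : f = u * r := by
        rw [hu, hr, mul_mk, hwu, hwr, List.takeWhile_append_dropWhile, mk_toWord]
      have hwu_red : IsRed wu := (isRed_toWord f).prefix (List.takeWhile_prefix p)
      have hwr_red : IsRed wr := (isRed_toWord f).suffix (List.dropWhile_suffix p)
      have htu : toWord u = wu := toWord_mk_of_isRed hwu_red
      have htr : toWord r = wr := toWord_mk_of_isRed hwr_red
      have hwu_ne : wu = ((x, b)) :: (t.takeWhile p) := by
        rw [hwu, hw, List.takeWhile_cons_of_pos (by simp [hp, hx])]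
      have hwuz : ∀ l ∈ wu, l.1 ≠ 0 := by
        intro l hl
        have := List.mem_takeWhile_imp (hwu ▸ hl)
        simpa [hp] using this
      have hfzu : Fz u := by intro l hl; rw [htu] at hl; exact hwuz l hl
      -- the word of τ u
      set m := wu.map sub with hm
      have htau_u : toWord (φ 0 u) = m := by
        rw [toWord_tau_fz hfzu, htu]
      have hm_ne : m ≠ [] := by rw [hm, hwu_ne]; simp
      have hm1 : ∀ l ∈ m, l.1 ≠ 1 := map_sub_no_one hwuz
      have hm_red : IsRed m := isRed_map_sub hwuz hwu_red
      have hτf_mul : φ 0 f = φ 0 u * φ 0 r := by rw [hf_eq, _root_.map_mul]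
      rcases hwrc : wr with _ | ⟨⟨y, c⟩, tr⟩
      · -- r = 1 : τ f = τ u
        have hr1 : r = 1 := by rw [hr, hwrc]; rfl
        have : toWord (φ 0 f) = m := by
          rw [hτf_mul, hr1, _root_.map_one, mul_one, htau_u]
        rw [this]
        refine ⟨hm_ne, fun c hc => ?_⟩
        obtain ⟨rest, hrest⟩ := take_two hc
        have : ((1:ℕ), c) ∈ m := by rw [hrest]; exact List.mem_cons_of_mem _ (List.mem_cons_self)
        exact hm1 _ this rfl
      · have hy : y = 0 := by
          have := dropWhile_head_false (p := p) (by rw [← hwr, hwrc])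
          simpa [hp] using this
        subst hy
        have hlenr : (toWord r).length ≤ n := by
          have h1 := congrArg List.length (List.takeWhile_append_dropWhile (p := p) (l := toWord f))
          rw [List.length_append, ← hwu, ← hwr] at h1
          have h3 : wu.length ≥ 1 := by rw [hwu_ne]; simp
          rw [htr]; omega
        have ihr := ih r hlenr
        have hw₂ : (toWord (φ 0 r)).take 2 = [(0, true), (1, c)] := by
          cases c
          · exact ihr.2.1 (by rw [Qm, htr, hwrc]; rfl)
          · exact ihr.1 (by rw [Qp, htr, hwrc]; rfl)
        obtain ⟨t₂, ht₂⟩ := take_two hw₂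
        -- last letter of m
        set lst := m.getLast hm_ne with hlst
        set A := m.dropLast with hA
        have hmA : A ++ [lst] = m := List.dropLast_append_getLast hm_ne
        have hlst_m : lst ∈ m := List.getLast_mem hm_ne
        have hA_sub : ∀ l ∈ A, l ∈ m := fun l hl => List.dropLast_sublist m |>.mem hl
        by_cases hcanc : lst = ((0:ℕ), false)
        · -- cancellation case
          have hτu_mk : φ 0 u = mk m := by rw [← htau_u, mk_toWord]
          have hτr_mk : φ 0 r = mk ((0, true) :: (1, c) :: t₂) := by rw [← ht₂, mk_toWord]
          have hcancel : φ 0 f = mk A * mk ((1, c) :: t₂) := by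
            rw [hτf_mul, hτu_mk, hτr_mk, ← hmA, hcanc]
            have := mk_append_cancel A ((1, c) :: t₂) 0 false
            simpa using this
          have hB_red : IsRed ((1, c) :: t₂) := by
            have := isRed_toWord (φ 0 r)
            rw [ht₂] at this
            exact this.tail
          rcases hAc : A with _ | ⟨a₀, A'⟩
          · -- A empty
            have : toWord (φ 0 f) = (1, c) :: t₂ := by
              rw [hcancel, hAc]
              show toWord (mk [] * _) = _
              rw [show (mk [] : F) = 1 from rfl, one_mul, toWord_mk_of_isRed hB_red]
            rw [this]
            refine ⟨by simp, fun c' hc' => ?_⟩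
            obtain ⟨rest, hrest⟩ := take_two hc'
            simp at hrest
          · -- A nonempty
            have hA_red : IsRed A := hm_red.prefix (by rw [← hmA]; exact List.prefix_append _ _)
            have hjoin : toWord (mk A * mk ((1, c) :: t₂)) = A ++ (1, c) :: t₂ := by
              have h1 : toWord (mk A) = A := toWord_mk_of_isRed hA_red
              have h2 : toWord (mk ((1, c) :: t₂)) = (1, c) :: t₂ := toWord_mk_of_isRed hB_red
              have h3 := toWord_mul_eq (f := mk A) (g := mk ((1, c) :: t₂)) (by
                rw [h1, h2]
                refine isRed_append hA_red hB_red ?_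
                intro a ha l hl
                cases hl
                have ha1 : a.1 ≠ 1 := hm1 a (hA_sub a (List.mem_of_mem_getLast? ha))
                intro hcon; exact absurd hcon.1 ha1)
              rw [h1, h2] at h3
              exact h3
            have htw : toWord (φ 0 f) = A ++ (1, c) :: t₂ := by rw [hcancel, hjoin]
            rw [htw, hAc]
            refine ⟨by simp, fun c' hc' => ?_⟩
            obtain ⟨rest, hrest⟩ := take_two hc'
            -- a₀ :: (A' ++ (1,c)::t₂) = (0,true)::(1,c')::rest
            rw [List.cons_append] at hrest
            injection hrest with h1 h2
            rcases hA'c : A' with _ | ⟨a₁, A''⟩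
            · rw [hA'c] at h2
              simp at h2
              -- then A = [(0,true)], lst = (0,false) adjacent in m: contradiction with reducedness
              have hm_eq : m = [((0:ℕ), true), ((0:ℕ), false)] := by
                rw [← hmA, hAc, hA'c, hcanc, h1]
                rfl
              have := hm_red
              rw [hm_eq] at this
              exact isRed_two this ⟨rfl, rfl⟩
            · rw [hA'c] at h2
              simp at h2
              have : a₁ ∈ m := hA_sub a₁ (by rw [hAc, hA'c]; exact List.mem_cons_of_mem _ (List.mem_cons_self))
              have := hm1 a₁ this
              rw [h2.1] at this
              exact this rfl
        · -- no cancellation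
          have hjoin : toWord (φ 0 f) = m ++ (0, true) :: (1, c) :: t₂ := by
            rw [hτf_mul, ← ht₂, ← htau_u]
            refine toWord_mul_eq ?_
            rw [htau_u, ht₂]
            refine isRed_append hm_red (by rw [← ht₂]; exact (ht₂ ▸ isRed_toWord (φ 0 r))) ?_
            intro a ha l hl
            cases hl
            have haeq : a = lst := by
              rw [List.getLast?_eq_getLast hm_ne] at ha
              cases ha; rfl
            intro hcon
            apply hcanc
            rw [← haeq]
            obtain ⟨h1, h2⟩ := hcon
            obtain ⟨a1, a2⟩ := a
            simp at h1 h2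
            subst h1; subst h2; rfl
          rw [hjoin]
          refine ⟨by simp, fun c' hc' => ?_⟩
          obtain ⟨rest, hrest⟩ := take_two hc'
          rcases hAc : A with _ | ⟨a₀, A'⟩
          · have hm_single : m = [lst] := by rw [← hmA, hAc]; rfl
            rw [hm_single] at hrest
            simp at hrest
          · rw [← hmA, hAc] at hrest
            simp only [List.cons_append, List.append_assoc] at hrest
            injection hrest with h1 h2
            rcases hA'c : A' with _ | ⟨a₁, A''⟩
            · rw [hA'c] at h2
              have hh := congrArg List.head? h2
              simp at hh
              have hne1 := hm1 lst hlst_m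
              rw [hh] at hne1
              exact hne1 rfl
            · rw [hA'c] at h2
              have hh := congrArg List.head? h2
              simp at hh
              have ha₁m : a₁ ∈ m := hA_sub a₁ (by rw [hAc, hA'c]; exact List.mem_cons_of_mem _ (List.mem_cons_self))
              have hne1 := hm1 a₁ ha₁m
              rw [hh] at hne1
              exact hne1 rfl

end LDAcyclic

namespace LDAcyclic

open FreeGroup

lemma ψφ (i : ℕ) : (ψ i).comp (φ i) = MonoidHom.id F := by
  refine FreeGroup.ext_hom _ _ fun j => ?_
  simp only [MonoidHom.comp_apply, MonoidHom.id_apply]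
  show ψ i (φ i (X j)) = X j
  by_cases h1 : j = i
  · subst h1
    simp (disch := omega) only [_root_.map_mul, _root_.map_inv, φ_same, φ_succ, φ_other,
      ψ_same, ψ_succ, ψ_other]
    group
  by_cases h2 : j = i + 1
  · subst h2
    simp (disch := omega) only [_root_.map_mul, _root_.map_inv, φ_same, φ_succ, φ_other,
      ψ_same, ψ_succ, ψ_other]
  · simp (disch := omega) only [_root_.map_mul, _root_.map_inv, φ_same, φ_succ, φ_other,
      ψ_same, ψ_succ, ψ_other]

lemma φψ (i : ℕ) : (φ i).comp (ψ i) = MonoidHom.id F := by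
  refine FreeGroup.ext_hom _ _ fun j => ?_
  simp only [MonoidHom.comp_apply, MonoidHom.id_apply]
  show φ i (ψ i (X j)) = X j
  by_cases h1 : j = i
  · subst h1
    simp (disch := omega) only [_root_.map_mul, _root_.map_inv, φ_same, φ_succ, φ_other,
      ψ_same, ψ_succ, ψ_other]
  by_cases h2 : j = i + 1
  · subst h2
    simp (disch := omega) only [_root_.map_mul, _root_.map_inv, φ_same, φ_succ, φ_other,
      ψ_same, ψ_succ, ψ_other]
    group
  · simp (disch := omega) only [_root_.map_mul, _root_.map_inv, φ_same, φ_succ, φ_other,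
      ψ_same, ψ_succ, ψ_other]

/-- The braid automorphism of the free group -/
def E (i : ℕ) : MulAut F := MonoidHom.toMulEquiv (φ i) (ψ i) (ψφ i) (φψ i)

lemma E_apply (i : ℕ) (f : F) : E i f = φ i f := rfl
lemma E_symm_apply (i : ℕ) (f : F) : (E i)⁻¹ f = ψ i f := rfl

lemma E_braid (i : ℕ) : E i * E (i + 1) * E i = E (i + 1) * E i * E (i + 1) := by
  apply MulEquiv.toMonoidHom_injective
  refine FreeGroup.ext_hom _ _ fun j => ?_
  show (E i * E (i+1) * E i) (of j) = (E (i+1) * E i * E (i+1)) (of j)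
  simp only [MulAut.mul_apply, E_apply]
  show φ i (φ (i+1) (φ i (X j))) = φ (i+1) (φ i (φ (i+1) (X j)))
  by_cases h1 : j = i
  · subst h1
    simp (disch := omega) only [_root_.map_mul, _root_.map_inv, φ_same, φ_succ, φ_other]
    group
  by_cases h2 : j = i + 1
  · subst h2
    simp (disch := omega) only [_root_.map_mul, _root_.map_inv, φ_same, φ_succ, φ_other]
  by_cases h3 : j = i + 1 + 1
  · subst h3
    simp (disch := omega) only [_root_.map_mul, _root_.map_inv, φ_same, φ_succ, φ_other]
  · simp (disch := omega) only [_root_.map_mul, _root_.map_inv, φ_same, φ_succ, φ_other]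

lemma E_comm (i j : ℕ) (hij : i + 2 ≤ j) : E i * E j = E j * E i := by
  apply MulEquiv.toMonoidHom_injective
  refine FreeGroup.ext_hom _ _ fun a => ?_
  show (E i * E j) (of a) = (E j * E i) (of a)
  simp only [MulAut.mul_apply, E_apply]
  show φ i (φ j (X a)) = φ j (φ i (X a))
  by_cases h1 : a = i
  · subst h1
    simp (disch := omega) only [_root_.map_mul, _root_.map_inv, φ_same, φ_succ, φ_other]
  by_cases h2 : a = i + 1
  · subst h2
    simp (disch := omega) only [_root_.map_mul, _root_.map_inv, φ_same, φ_succ, φ_other]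
  by_cases h3 : a = j
  · subst h3
    simp (disch := omega) only [_root_.map_mul, _root_.map_inv, φ_same, φ_succ, φ_other]
  by_cases h4 : a = j + 1
  · subst h4
    simp (disch := omega) only [_root_.map_mul, _root_.map_inv, φ_same, φ_succ, φ_other]
  · simp (disch := omega) only [_root_.map_mul, _root_.map_inv, φ_same, φ_succ, φ_other]

end LDAcyclic

namespace LDAcyclic

open FreeGroup

/-- relators for the infinite braid group -/
def rels : Set (FreeGroup ℕ) :=
  {r | ∃ i : ℕ, r = FreeGroup.of i * FreeGroup.of (i+1) * FreeGroup.of i *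
      (FreeGroup.of (i+1) * FreeGroup.of i * FreeGroup.of (i+1))⁻¹} ∪
  {r | ∃ i j : ℕ, i + 2 ≤ j ∧ r = FreeGroup.of i * FreeGroup.of j *
      (FreeGroup.of j * FreeGroup.of i)⁻¹}

/-- the infinite braid group -/
abbrev B := PresentedGroup rels

lemma relOne {r : FreeGroup ℕ} (hr : r ∈ rels) : (QuotientGroup.mk r : B) = 1 :=
  (QuotientGroup.eq_one_iff r).2 (Subgroup.subset_normalClosure hr)

lemma mk_of (i : ℕ) : (QuotientGroup.mk (FreeGroup.of i) : B) = PresentedGroup.of i := rfl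

lemma braidB (i : ℕ) :
    (PresentedGroup.of i * PresentedGroup.of (i+1) * PresentedGroup.of i : B) =
      PresentedGroup.of (i+1) * PresentedGroup.of i * PresentedGroup.of (i+1) := by
  have h := relOne (Or.inl ⟨i, rfl⟩)
  rw [QuotientGroup.mk_mul, QuotientGroup.mk_mul, QuotientGroup.mk_mul, QuotientGroup.mk_inv,
    QuotientGroup.mk_mul, QuotientGroup.mk_mul, mul_inv_eq_one] at h
  exact h

lemma commB (i j : ℕ) (hij : i + 2 ≤ j) :
    (PresentedGroup.of i * PresentedGroup.of j : B) =
      PresentedGroup.of j * PresentedGroup.of i := by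
  have h := relOne (Or.inr ⟨i, j, hij, rfl⟩)
  rw [QuotientGroup.mk_mul, QuotientGroup.mk_inv, QuotientGroup.mk_mul, mul_inv_eq_one] at h
  exact h

/-- the shift endomorphism -/
def s : B →* B :=
  PresentedGroup.toGroup (f := fun i => (PresentedGroup.of (i+1) : B)) (by
    intro r hr
    rcases hr with ⟨i, rfl⟩ | ⟨i, j, hij, rfl⟩
    · simp only [_root_.map_mul, _root_.map_inv, FreeGroup.lift_apply_of]
      rw [mul_inv_eq_one]
      exact braidB (i+1)
    · simp only [_root_.map_mul, _root_.map_inv, FreeGroup.lift_apply_of]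
      rw [mul_inv_eq_one]
      exact commB (i+1) (j+1) (by omega))

lemma s_of (i : ℕ) : s (PresentedGroup.of i) = PresentedGroup.of (i+1) :=
  PresentedGroup.toGroup.of _

/-- the distinguished generator -/
def σ : B := PresentedGroup.of 0

lemma σ_comm (c : B) : σ * s (s c) = s (s c) * σ := by
  have hom_eq : ((MulAut.conj σ).toMonoidHom.comp (s.comp s)) = s.comp s := by
    refine PresentedGroup.ext fun i => ?_
    simp only [MonoidHom.comp_apply, MulEquiv.coe_toMonoidHom, MulAut.conj_apply, s_of]
    have hc := commB 0 (i+1+1) (by omega)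
    rw [show (PresentedGroup.of 0 : B) = σ from rfl] at hc
    calc σ * PresentedGroup.of (i+1+1) * σ⁻¹
        = PresentedGroup.of (i+1+1) * σ * σ⁻¹ := by rw [hc]
      _ = PresentedGroup.of (i+1+1) := by group
  have h2 := congrArg (fun h : B →* B => h c) hom_eq
  simp only [MonoidHom.comp_apply, MulEquiv.coe_toMonoidHom, MulAut.conj_apply] at h2
  exact mul_inv_eq_iff_eq_mul.mp h2

lemma σ_comm_inv (c : B) : σ * (s (s c))⁻¹ = (s (s c))⁻¹ * σ := by
  have h := σ_comm c
  calc σ * (s (s c))⁻¹ = (s (s c))⁻¹ * (s (s c) * σ) * (s (s c))⁻¹ := by group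
    _ = (s (s c))⁻¹ * (σ * s (s c)) * (s (s c))⁻¹ := by rw [h]
    _ = (s (s c))⁻¹ * σ := by group

lemma braid0 : σ * s σ * σ = s σ * σ * s σ := by
  show σ * s (PresentedGroup.of 0) * σ = s (PresentedGroup.of 0) * σ * s (PresentedGroup.of 0)
  rw [s_of]
  exact braidB 0

/-- the shelf operation -/
def ld (a b : B) : B := a * s b * σ * (s a)⁻¹

lemma swap {G : Type*} [Group G] {x y : G} (h : x * y = y * x) (z : G) :
    x * (y * z) = y * (x * z) := by
  rw [← mul_assoc, h, mul_assoc]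

lemma ld_ld (a b c : B) : ld a (ld b c) = ld (ld a b) (ld a c) := by
  unfold ld
  simp only [_root_.map_mul, _root_.map_inv, mul_inv_rev, inv_inv]
  simp only [mul_assoc]
  -- RHS: cancel (s a)⁻¹ * (s a * ...)
  rw [inv_mul_cancel_left]
  -- now: a * (s b * (s(s c) * (s σ * ((s(s b))⁻¹ * (σ * (s a)⁻¹))))) =
  --      a * (s b * (σ * (s(s c) * (s σ * ((s(s a))⁻¹ * (σ * (s(s a) * ((s σ)⁻¹ * ((s(s b))⁻¹ * (s a)⁻¹)))))))))
  have hb : ∀ Y : B, σ * (s σ * (σ * ((s σ)⁻¹ * Y))) = s σ * (σ * Y) := by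
    intro Y
    have h1 : σ * (s σ * (σ * ((s σ)⁻¹ * Y))) = (σ * s σ * σ) * ((s σ)⁻¹ * Y) := by group
    rw [h1, braid0]
    group
  congr 1
  congr 1
  rw [swap (σ_comm c)]
  congr 1
  rw [swap (σ_comm_inv a).symm, inv_mul_cancel_left, hb]
  congr 1
  rw [swap (σ_comm_inv b)]

end LDAcyclic

namespace LDAcyclic

open FreeGroup

/-- the Artin action of the braid group on the free group -/
def Arts : B →* MulAut F :=
  PresentedGroup.toGroup (f := E) (by
    intro r hr
    rcases hr with ⟨i, rfl⟩ | ⟨i, j, hij, rfl⟩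
    · simp only [_root_.map_mul, _root_.map_inv, FreeGroup.lift_apply_of]
      rw [mul_inv_eq_one]
      exact E_braid i
    · simp only [_root_.map_mul, _root_.map_inv, FreeGroup.lift_apply_of]
      rw [mul_inv_eq_one]
      exact E_comm i j hij)

lemma Arts_of (i : ℕ) : Arts (PresentedGroup.of i) = E i :=
  PresentedGroup.toGroup.of _

/-- facts about the elementary automorphisms with positive index -/
lemma φ_fix0 {i : ℕ} (hi : i ≠ 0) : φ i (X 0) = X 0 :=
  φ_other i (fun h => hi h.symm) (by omega)

lemma ψ_fix0 {i : ℕ} (hi : i ≠ 0) : ψ i (X 0) = X 0 :=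
  ψ_other i (fun h => hi h.symm) (by omega)

lemma φ_fz {i : ℕ} (hi : i ≠ 0) : ∀ f, Fz f → Fz (φ i f) := by
  refine Fz_hom fun j hj => ?_
  by_cases h1 : j = i
  · subst h1
    rw [φ_same]
    exact Fz_mul (Fz_mul (Fz_of hj) (Fz_of (by omega))) (Fz_inv (Fz_of hj))
  by_cases h2 : j = i + 1
  · subst h2
    rw [φ_succ]
    exact Fz_of hi
  · rw [φ_other i h1 h2]
    exact Fz_of hj

lemma ψ_fz {i : ℕ} (hi : i ≠ 0) : ∀ f, Fz f → Fz (ψ i f) := by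
  refine Fz_hom fun j hj => ?_
  by_cases h1 : j = i
  · subst h1
    rw [ψ_same]
    exact Fz_of (by omega)
  by_cases h2 : j = i + 1
  · subst h2
    rw [ψ_succ]
    exact Fz_mul (Fz_mul (Fz_inv (Fz_of hj)) (Fz_of hi)) (Fz_of hj)
  · rw [ψ_other i h1 h2]
    exact Fz_of hj

/-- goodness of an automorphism: fixes x₀ and preserves Qp -/
def Good (e : MulAut F) : Prop := e (X 0) = X 0 ∧ ∀ f, Qp f → Qp (e f)

lemma good_one : Good 1 := ⟨rfl, fun _ h => h⟩

lemma good_mul {e e' : MulAut F} (h : Good e) (h' : Good e') : Good (e * e') := by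
  refine ⟨?_, fun f hf => ?_⟩
  · rw [MulAut.mul_apply, h'.1, h.1]
  · rw [MulAut.mul_apply]
    exact h.2 _ (h'.2 _ hf)

lemma good_E {i : ℕ} (hi : i ≠ 0) : Good (E i) := by
  refine ⟨φ_fix0 hi, fun f hf => ?_⟩
  have hinj : Function.Injective (φ i) := by
    intro a b hab
    exact (E i).injective hab
  exact (hc_main (φ i) hinj (φ_fix0 hi) (φ_fz hi) (toWord f).length f le_rfl).1 hf

lemma good_E_inv {i : ℕ} (hi : i ≠ 0) : Good (E i)⁻¹ := by
  refine ⟨ψ_fix0 hi, fun f hf => ?_⟩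
  have hinj : Function.Injective (ψ i) := by
    intro a b hab
    exact (E i).symm.injective hab
  exact (hc_main (ψ i) hinj (ψ_fix0 hi) (ψ_fz hi) (toWord f).length f le_rfl).1 hf

lemma good_shift (u : B) : Good (Arts (s u)) := by
  induction u using QuotientGroup.induction_on with
  | H w =>
    induction w using FreeGroup.induction_on with
    | C1 =>
      show Good (Arts (s (1 : B)))
      rw [_root_.map_one, _root_.map_one]
      exact good_one
    | of i =>
      rw [show (QuotientGroup.mk (FreeGroup.of i) : B) = PresentedGroup.of i by rfl, s_of, Arts_of]
      exact good_E (by omega)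
    | inv_of i _ =>
      rw [show (QuotientGroup.mk (FreeGroup.of i)⁻¹ : B) = (PresentedGroup.of i)⁻¹ by rfl,
        _root_.map_inv, s_of, _root_.map_inv, Arts_of]
      exact good_E_inv (by omega)
    | mul x y hx hy =>
      have e : ∀ a b : B, Good (Arts (s a)) → Good (Arts (s b)) → Good (Arts (s (a * b))) := by
        intro a b ha hb
        rw [_root_.map_mul, _root_.map_mul]
        exact good_mul ha hb
      exact e _ _ hx hy

/-- τ preserves Qp -/
lemma tau_Qp {f : F} (hf : Qp f) : Qp (φ 0 f) := by
  have := (tau_main (toWord f).length f le_rfl).1 hf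
  obtain ⟨r, hr⟩ := take_two this
  rw [Qp, hr]
  rfl

lemma Arts_σ : Arts σ = E 0 := Arts_of 0

lemma x0inv_word : toWord ((X 0)⁻¹ : F) = [(0, false)] := by
  rw [toWord_inv, toWord_of]
  rfl

lemma tau_x0inv : Qp (φ 0 ((X 0)⁻¹)) := by
  have h1 : φ 0 ((X 0)⁻¹) = mk [(0, true), (1, false), (0, false)] := by
    rw [_root_.map_inv, φ_same]
    have : (mk [((0:ℕ), true), ((1:ℕ), false), ((0:ℕ), false)] : F) =
        mk [((0:ℕ), true)] * mk [((1:ℕ), false)] * mk [((0:ℕ), false)] := by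
      rw [mul_mk, mul_mk]
      rfl
    rw [this, mk_single_pos, mk_single_neg, mk_single_neg, zero_add]
    group
  rw [Qp, h1, toWord_mk_of_isRed (by simp [IsRed, List.Chain'])]
  rfl

/-- σ₁-positive braids -/
inductive Pos : B → Prop
  | base (u v : B) : Pos (s u * σ * s v)
  | mul {p q : B} : Pos p → Pos q → Pos (p * q)

lemma pos_key {p : B} (hp : Pos p) : ∀ f : F, (f = (X 0)⁻¹ ∨ Qp f) → Qp (Arts p f) := by
  induction hp with
  | base u v =>
    intro f hf
    rw [_root_.map_mul, _root_.map_mul, MulAut.mul_apply, MulAut.mul_apply]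
    have hstep : Qp (Arts σ (Arts (s v) f)) := by
      rcases hf with rfl | hQ
      · have : Arts (s v) ((X 0)⁻¹) = (X 0)⁻¹ := by
          rw [_root_.map_inv, (good_shift v).1]
        rw [this, Arts_σ]
        exact tau_x0inv
      · rw [Arts_σ]
        exact tau_Qp ((good_shift v).2 f hQ)
    exact (good_shift u).2 _ hstep
  | mul _ _ ihp ihq =>
    intro f hf
    rw [_root_.map_mul, MulAut.mul_apply]
    exact ihp _ (Or.inr (ihq f hf))

lemma pos_ne_one {p : B} (hp : Pos p) : p ≠ 1 := by
  intro h
  have := pos_key hp ((X 0)⁻¹) (Or.inl rfl)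
  rw [h, _root_.map_one] at this
  rw [Qp] at this
  rw [show ((1 : MulAut F) ((X 0)⁻¹)) = (X 0)⁻¹ from rfl, x0inv_word] at this
  cases this

end LDAcyclic

namespace LDAcyclic

/-- evaluation of terms into the braid group -/
def ev : FreeMagma Unit → B
  | .of _ => 1
  | .mul a b => ld (ev a) (ev b)

lemma ev_mul (a b : FreeMagma Unit) : ev (a * b) = ld (ev a) (ev b) := rfl

lemma ev_LDEquiv {T T' : FreeMagma Unit} (h : LDEquiv T T') : ev T = ev T' := by
  induction h with
  | ld a b c => rw [ev_mul, ev_mul, ev_mul, ev_mul, ev_mul]; exact ld_ld _ _ _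
  | refl a => rfl
  | symm _ ih => exact ih.symm
  | trans _ _ ih1 ih2 => exact ih1.trans ih2
  | mul_left c _ ih => rw [ev_mul, ev_mul, ih]
  | mul_right c _ ih => rw [ev_mul, ev_mul, ih]

lemma div_step {T T' : FreeMagma Unit} (h : LDDiv T T') : ∃ p, Pos p ∧ ev T' = ev T * p := by
  obtain ⟨T₁, he⟩ := h
  refine ⟨s (ev T₁) * σ * s ((ev T)⁻¹), Pos.base _ _, ?_⟩
  rw [← ev_LDEquiv he, ev_mul]
  unfold ld
  rw [_root_.map_inv]
  group

lemma div_decomp {T T' : FreeMagma Unit} (h : Relation.TransGen LDDiv T T') :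
    ∃ p, Pos p ∧ ev T' = ev T * p := by
  induction h with
  | single h1 => exact div_step h1
  | tail _ hstep ih =>
    obtain ⟨p, hp, he⟩ := ih
    obtain ⟨q, hq, he2⟩ := div_step hstep
    exact ⟨p * q, Pos.mul hp hq, by rw [he2, he, mul_assoc]⟩

end LDAcyclic

/-- unconditional exclusion property; acyclicity of the free shelf:
for all terms `T, T'` over one variable, `T ≡LD T'` and `T ⊏*LD T'` cannot both
hold; in particular `T ⊏*LD T` never holds, i.e. the free left shelf on one
generator is acyclic. -/
theorem exclusion_and_free_shelf_acyclic :
    (∀ T T' : FreeMagma Unit, ¬ (LDEquiv T T' ∧ Relation.TransGen LDDiv T T')) ∧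
    (∀ T : FreeMagma Unit, ¬ Relation.TransGen LDDiv T T) := by
  have main : ∀ T T' : FreeMagma Unit, ¬ (LDEquiv T T' ∧ Relation.TransGen LDDiv T T') := by
    rintro T T' ⟨heq, hdiv⟩
    obtain ⟨p, hp, he⟩ := LDAcyclic.div_decomp hdiv
    rw [← LDAcyclic.ev_LDEquiv heq] at he
    exact LDAcyclic.pos_ne_one hp (left_eq_mul.mp he)
  exact ⟨main, fun T h => main T T ⟨LDEquiv.refl T, h⟩⟩
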